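/- arXiv:1410.6075 — 6 statements merged into one kernel-verified Lean document; each statement's English description precedes it below -/
import Mathlib

section
/- Let f : [i, i+1] → ℝⁿ and g : [j, j+1] → ℝⁿ be affine (linear interpolation) segments in a normed space, and δ ≥ 0. Then the free space Free_δ(f,g) = {(ρ_f, ρ_g) ∈ [i,i+1] × [j,j+1] : ‖f(ρ_f) − g(ρ_g)‖ ≤ δ} is a convex subset of ℝ². -/
open Set

/-- The free space of two affine segments is convex, for any norm. -/
theorem free_space_convex {V : Type*} [NormedAddCommGroup V] [NormedSpace ℝ V]
    (i j δ : ℝ) (fi fi1 gj gj1 : V)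
    (f g : ℝ → V)
    (hf : ∀ lam ∈ Icc (0:ℝ) 1, f (i + lam) = (1 - lam) • fi + lam • fi1)
    (hg : ∀ lam ∈ Icc (0:ℝ) 1, g (j + lam) = (1 - lam) • gj + lam • gj1) :
    Convex ℝ {p : ℝ × ℝ |
      p.1 ∈ Icc i (i + 1) ∧ p.2 ∈ Icc j (j + 1) ∧ ‖f p.1 - g p.2‖ ≤ δ} := by
  have keyf : ∀ x ∈ Icc i (i+1), f x = (1 - (x - i)) • fi + (x - i) • fi1 := by
    intro x hx
    have := hf (x - i) ⟨by linarith [hx.1], by linarith [hx.2]⟩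
    simpa using this
  have keyg : ∀ y ∈ Icc j (j+1), g y = (1 - (y - j)) • gj + (y - j) • gj1 := by
    intro y hy
    have := hg (y - j) ⟨by linarith [hy.1], by linarith [hy.2]⟩
    simpa using this
  intro p hp q hq a b ha hb hab
  obtain ⟨hp1, hp2, hp3⟩ := hp
  obtain ⟨hq1, hq2, hq3⟩ := hq
  have hI : a • p.1 + b • q.1 ∈ Icc i (i+1) := (convex_Icc i (i+1)) hp1 hq1 ha hb hab
  have hJ : a • p.2 + b • q.2 ∈ Icc j (j+1) := (convex_Icc j (j+1)) hp2 hq2 ha hb hab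
  refine ⟨hI, hJ, ?_⟩
  show ‖f (a • p.1 + b • q.1) - g (a • p.2 + b • q.2)‖ ≤ δ
  rw [keyf _ hI, keyg _ hJ]
  rw [keyf _ hp1, keyg _ hp2] at hp3
  rw [keyf _ hq1, keyg _ hq2] at hq3
  have hb' : b = 1 - a := by linarith
  subst hb'
  have hkey :
      ((1 - (a • p.1 + (1 - a) • q.1 - i)) • fi + (a • p.1 + (1 - a) • q.1 - i) • fi1)
        - ((1 - (a • p.2 + (1 - a) • q.2 - j)) • gj + (a • p.2 + (1 - a) • q.2 - j) • gj1)
      = a • (((1 - (p.1 - i)) • fi + (p.1 - i) • fi1)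
              - ((1 - (p.2 - j)) • gj + (p.2 - j) • gj1))
        + (1 - a) • (((1 - (q.1 - i)) • fi + (q.1 - i) • fi1)
              - ((1 - (q.2 - j)) • gj + (q.2 - j) • gj1)) := by
    simp only [smul_eq_mul]
    module
  rw [hkey]
  calc ‖_ + _‖ ≤ ‖a • (((1 - (p.1 - i)) • fi + (p.1 - i) • fi1)
              - ((1 - (p.2 - j)) • gj + (p.2 - j) • gj1))‖
        + ‖(1 - a) • (((1 - (q.1 - i)) • fi + (q.1 - i) • fi1)
              - ((1 - (q.2 - j)) • gj + (q.2 - j) • gj1))‖ := norm_add_le _ _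
    _ = a * ‖((1 - (p.1 - i)) • fi + (p.1 - i) • fi1)
              - ((1 - (p.2 - j)) • gj + (p.2 - j) • gj1)‖
        + (1 - a) * ‖((1 - (q.1 - i)) • fi + (q.1 - i) • fi1)
              - ((1 - (q.2 - j)) • gj + (q.2 - j) • gj1)‖ := by
        rw [norm_smul, norm_smul, Real.norm_of_nonneg ha, Real.norm_of_nonneg hb]
    _ ≤ a * δ + (1 - a) * δ := by gcongr
    _ = δ := by ring
end

section
/- The Skorokhod distance between two continuous traces equals the Fréchet distance between their graph curves: for continuous traces x : [a,b] → O and y : [c,d] → O into a real normed vector space O, define C_x(ρ) = (x(ρ), ρ) ∈ O × ℝ with the norm ‖(o,t)‖ = max(‖o‖, |t|), and similarly C_y. Then inf over retimings r of max(sup_t |r(t)−t|, sup_t ‖x(t) − y(r(t))‖) equals inf over pairs of strictly increasing continuous surjections α_f : [0,1] → [a,b], α_g : [0,1] → [c,d] of sup_{θ} ‖C_x(α_f(θ)) − C_y(α_g(θ))‖. -/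
open Set

private lemma sSup_image_max' {s : Set ℝ} (hs : s.Nonempty) {f g : ℝ → ℝ}
    (hf : BddAbove (f '' s)) (hg : BddAbove (g '' s)) :
    sSup ((fun t => max (f t) (g t)) '' s) = max (sSup (f '' s)) (sSup (g '' s)) := by
  have hbdd : BddAbove ((fun t => max (f t) (g t)) '' s) := by
    obtain ⟨M, hM⟩ := hf; obtain ⟨N, hN⟩ := hg
    refine ⟨max M N, ?_⟩
    rintro v ⟨t, ht, rfl⟩
    exact max_le_max (hM ⟨t, ht, rfl⟩) (hN ⟨t, ht, rfl⟩)
  apply le_antisymm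
  · refine csSup_le (hs.image _) ?_
    rintro v ⟨t, ht, rfl⟩
    exact max_le_max (le_csSup hf ⟨t, ht, rfl⟩) (le_csSup hg ⟨t, ht, rfl⟩)
  · refine max_le ?_ ?_
    · refine csSup_le (hs.image _) ?_
      rintro v ⟨t, ht, rfl⟩
      exact le_trans (le_max_left _ _) (le_csSup hbdd ⟨t, ht, rfl⟩)
    · refine csSup_le (hs.image _) ?_
      rintro v ⟨t, ht, rfl⟩
      exact le_trans (le_max_right _ _) (le_csSup hbdd ⟨t, ht, rfl⟩)

/-- The continuous inverse of a continuous strictly monotone bijection between compact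
intervals, packaged with its properties. -/
private lemma inv_of_bijOn {αf : ℝ → ℝ} {p q u v : ℝ}
    (hc : ContinuousOn αf (Icc p q)) (hm : StrictMonoOn αf (Icc p q))
    (hb : Set.BijOn αf (Icc p q) (Icc u v)) :
    let θ := Function.invFunOn αf (Icc p q)
    (∀ s ∈ Icc p q, θ (αf s) = s) ∧ (∀ t ∈ Icc u v, αf (θ t) = t) ∧
    Set.BijOn θ (Icc u v) (Icc p q) ∧ StrictMonoOn θ (Icc u v) ∧
    ContinuousOn θ (Icc u v) := by
  intro θ
  have leftInv : ∀ s ∈ Icc p q, θ (αf s) = s := fun s hs =>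
    hb.injOn.leftInvOn_invFunOn hs
  have rightInv : ∀ t ∈ Icc u v, αf (θ t) = t := fun t ht =>
    hb.surjOn.rightInvOn_invFunOn ht
  have memθ : ∀ t ∈ Icc u v, θ t ∈ Icc p q := by
    intro t ht
    obtain ⟨s, hs, hst⟩ := hb.surjOn ht
    exact Function.invFunOn_mem ⟨s, hs, hst⟩
  have hbij : Set.BijOn θ (Icc u v) (Icc p q) :=
    Set.InvOn.bijOn ⟨rightInv, leftInv⟩ memθ hb.mapsTo
  have hmono : StrictMonoOn θ (Icc u v) := by
    intro t1 ht1 t2 ht2 h12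
    rw [← hm.lt_iff_lt (memθ t1 ht1) (memθ t2 ht2), rightInv t1 ht1, rightInv t2 ht2]
    exact h12
  refine ⟨leftInv, rightInv, hbij, hmono, ?_⟩
  -- continuity of the inverse via compactness
  have hcont' : Continuous (fun s : Icc p q => (⟨αf s, hb.mapsTo s.2⟩ : Icc u v)) := by
    refine Continuous.subtype_mk ?_ _
    exact continuousOn_iff_continuous_restrict.mp hc
  let e : Icc p q ≃ Icc u v :=
    { toFun := fun s => ⟨αf s, hb.mapsTo s.2⟩
      invFun := fun t => ⟨θ t, memθ t t.2⟩
      left_inv := fun s => Subtype.ext (leftInv s s.2)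
      right_inv := fun t => Subtype.ext (rightInv t t.2) }
  have H : Continuous ⇑e := hcont'
  rw [continuousOn_iff_continuous_restrict]
  have hre : (Icc u v).restrict θ = Subtype.val ∘ (H.homeoOfEquivCompactToT2 (f := e)).symm := by
    funext t
    rfl
  change Continuous ((Icc u v).restrict θ); rw [hre]
  exact continuous_subtype_val.comp (H.homeoOfEquivCompactToT2 (f := e)).symm.continuous

/-- The Skorokhod distance between two continuous traces equals the Fréchet distance
between their graph curves `C_x(ρ) = (x ρ, ρ)`, `C_y(ρ) = (y ρ, ρ)` in `O × ℝ` with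
the norm `‖(o,t)‖ = max ‖o‖ |t|`. -/
theorem skorokhod_eq_frechet {O : Type*} [NormedAddCommGroup O] [NormedSpace ℝ O]
    (a b c d : ℝ) (hab : a < b) (hcd : c < d)
    (x y : ℝ → O)
    (hx : ContinuousOn x (Icc a b)) (hy : ContinuousOn y (Icc c d)) :
    sInf {v : ℝ | ∃ r : ℝ → ℝ,
        ContinuousOn r (Icc a b) ∧ StrictMonoOn r (Icc a b) ∧
        Set.BijOn r (Icc a b) (Icc c d) ∧
        v = max (sSup ((fun t => |r t - t|) '' Icc a b))
                (sSup ((fun t => ‖x t - y (r t)‖) '' Icc a b))}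
      =
    sInf {v : ℝ | ∃ αf αg : ℝ → ℝ,
        ContinuousOn αf (Icc 0 1) ∧ StrictMonoOn αf (Icc 0 1) ∧
        Set.BijOn αf (Icc 0 1) (Icc a b) ∧
        ContinuousOn αg (Icc 0 1) ∧ StrictMonoOn αg (Icc 0 1) ∧
        Set.BijOn αg (Icc 0 1) (Icc c d) ∧
        v = sSup ((fun θ =>
              max ‖x (αf θ) - y (αg θ)‖ |αf θ - αg θ|) '' Icc 0 1)} := by
  have hI01 : (Icc (0:ℝ) 1).Nonempty := nonempty_Icc.mpr (by norm_num)
  have hIab : (Icc a b).Nonempty := nonempty_Icc.mpr hab.le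
  have hcompact01 : IsCompact (Icc (0:ℝ) 1) := isCompact_Icc
  have hcompactab : IsCompact (Icc a b) := isCompact_Icc
  apply congrArg sInf
  ext v
  simp only [mem_setOf_eq]
  constructor
  · -- Skorokhod value is a Fréchet value
    rintro ⟨r, hrc, hrm, hrb, rfl⟩
    set αf : ℝ → ℝ := fun s => a + s * (b - a) with hαf_def
    have hba : (0:ℝ) < b - a := by linarith
    have hαfc : ContinuousOn αf (Icc 0 1) := by fun_prop
    have hαfm : StrictMonoOn αf (Icc 0 1) := fun s1 _ s2 _ h => by
      simp only [hαf_def]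
      nlinarith
    have hαfb : Set.BijOn αf (Icc 0 1) (Icc a b) := by
      have hmt : MapsTo αf (Icc 0 1) (Icc a b) := by
        rintro s ⟨h0, h1⟩
        simp only [hαf_def, mem_Icc]
        constructor <;> nlinarith
      have hmt' : MapsTo (fun t => (t - a) / (b - a)) (Icc a b) (Icc 0 1) := by
        rintro t ⟨h0, h1⟩
        simp only [mem_Icc]
        constructor
        · exact div_nonneg (by linarith) hba.le
        · rw [div_le_one hba]; linarith
      refine Set.InvOn.bijOn ⟨?_, ?_⟩ hmt hmt'
      · intro s _; simp only [hαf_def]; field_simp; ring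
      · intro t _; simp only [hαf_def]; field_simp; ring
    set αg : ℝ → ℝ := r ∘ αf with hαg_def
    refine ⟨αf, αg, hαfc, hαfm, hαfb, hrc.comp hαfc hαfb.mapsTo,
      hrm.comp hαfm hαfb.mapsTo, hrb.comp hαfb, ?_⟩
    -- value equality
    have himg1 : (fun θ => ‖x (αf θ) - y (αg θ)‖) '' Icc 0 1
        = (fun t => ‖x t - y (r t)‖) '' Icc a b := by
      rw [← hαfb.image_eq, image_image]
      exact image_congr fun s _ => by simp [hαg_def]
    have himg2 : (fun θ => |αf θ - αg θ|) '' Icc 0 1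
        = (fun t => |r t - t|) '' Icc a b := by
      rw [← hαfb.image_eq, image_image]
      exact image_congr fun s _ => by simp only [hαg_def, Function.comp_apply]; exact abs_sub_comm _ _
    have hbdd1 : BddAbove ((fun t => ‖x t - y (r t)‖) '' Icc a b) :=
      hcompactab.bddAbove_image ((hx.sub (hy.comp hrc hrb.mapsTo)).norm)
    have hbdd2 : BddAbove ((fun t => |r t - t|) '' Icc a b) :=
      hcompactab.bddAbove_image ((hrc.sub continuousOn_id).abs)
    rw [sSup_image_max' hI01 (f := fun θ => ‖x (αf θ) - y (αg θ)‖)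
        (g := fun θ => |αf θ - αg θ|) (himg1 ▸ hbdd1) (himg2 ▸ hbdd2),
      himg1, himg2, max_comm]
  · -- Fréchet value is a Skorokhod value
    rintro ⟨αf, αg, hαfc, hαfm, hαfb, hαgc, hαgm, hαgb, rfl⟩
    obtain ⟨leftInv, rightInv, hθb, hθm, hθc⟩ := inv_of_bijOn hαfc hαfm hαfb
    set θ : ℝ → ℝ := Function.invFunOn αf (Icc 0 1) with hθ_def
    set r : ℝ → ℝ := αg ∘ θ with hr_def
    refine ⟨r, hαgc.comp hθc hθb.mapsTo, hαgm.comp hθm hθb.mapsTo, hαgb.comp hθb, ?_⟩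
    have hreq : ∀ s ∈ Icc (0:ℝ) 1, r (αf s) = αg s := fun s hs => by
      simp only [hr_def, Function.comp_apply, leftInv s hs]
    have himg1 : (fun t => ‖x t - y (r t)‖) '' Icc a b
        = (fun s => ‖x (αf s) - y (αg s)‖) '' Icc 0 1 := by
      rw [← hαfb.image_eq, image_image]
      exact image_congr fun s hs => by rw [hreq s hs]
    have himg2 : (fun t => |r t - t|) '' Icc a b
        = (fun s => |αf s - αg s|) '' Icc 0 1 := by
      rw [← hαfb.image_eq, image_image]
      exact image_congr fun s hs => by rw [hreq s hs, abs_sub_comm]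
    have hbdd1 : BddAbove ((fun s => ‖x (αf s) - y (αg s)‖) '' Icc 0 1) :=
      hcompact01.bddAbove_image (((hx.comp hαfc hαfb.mapsTo).sub
        (hy.comp hαgc hαgb.mapsTo)).norm)
    have hbdd2 : BddAbove ((fun s => |αf s - αg s|) '' Icc 0 1) :=
      hcompact01.bddAbove_image ((hαfc.sub hαgc).abs)
    rw [sSup_image_max' hI01 (f := fun s => ‖x (αf s) - y (αg s)‖)
        (g := fun s => |αf s - αg s|) hbdd1 hbdd2, himg1, himg2, max_comm]
end

section
/- For polygonal curves f and g (each defined on a nondegenerate interval) into a normed space, the non-bijective Fréchet distance (taken over continuous non-decreasing surjective reparameterizations) equals the Fréchet distance taken over continuous strictly increasing bijective reparameterizations. -/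
open Set

private lemma img_bddAbove {V : Type*} [NormedAddCommGroup V]
    {af bf ag bg : ℝ} {f g : ℝ → V}
    (hf : ContinuousOn f (Icc af bf)) (hg : ContinuousOn g (Icc ag bg))
    {αf αg : ℝ → ℝ}
    (hcf : ContinuousOn αf (Icc 0 1)) (hmf : MapsTo αf (Icc 0 1) (Icc af bf))
    (hcg : ContinuousOn αg (Icc 0 1)) (hmg : MapsTo αg (Icc 0 1) (Icc ag bg)) :
    BddAbove ((fun θ => ‖f (αf θ) - g (αg θ)‖) '' Icc 0 1) := by
  have h : ContinuousOn (fun θ => ‖f (αf θ) - g (αg θ)‖) (Icc 0 1) :=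
    ((hf.comp hcf hmf).sub (hg.comp hcg hmg)).norm
  exact (isCompact_Icc.image_of_continuousOn h).bddAbove

private lemma img_sSup_nonneg {V : Type*} [NormedAddCommGroup V]
    {af bf ag bg : ℝ} {f g : ℝ → V}
    (hf : ContinuousOn f (Icc af bf)) (hg : ContinuousOn g (Icc ag bg))
    {αf αg : ℝ → ℝ}
    (hcf : ContinuousOn αf (Icc 0 1)) (hmf : MapsTo αf (Icc 0 1) (Icc af bf))
    (hcg : ContinuousOn αg (Icc 0 1)) (hmg : MapsTo αg (Icc 0 1) (Icc ag bg)) :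
    0 ≤ sSup ((fun θ => ‖f (αf θ) - g (αg θ)‖) '' Icc 0 1) := by
  refine le_trans (norm_nonneg (f (αf 0) - g (αg 0))) ?_
  exact le_csSup (img_bddAbove hf hg hcf hmf hcg hmg)
    ⟨0, ⟨le_refl 0, zero_le_one⟩, rfl⟩

/-- Strictly monotone continuous map with correct endpoints is a bijection. -/
private lemma bijOn_of_endpoints {a b : ℝ} {β : ℝ → ℝ}
    (hc : ContinuousOn β (Icc 0 1)) (hsm : StrictMonoOn β (Icc 0 1))
    (h0 : β 0 = a) (h1 : β 1 = b) :
    BijOn β (Icc 0 1) (Icc a b) := by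
  have hmem0 : (0:ℝ) ∈ Icc (0:ℝ) 1 := ⟨le_refl 0, zero_le_one⟩
  have hmem1 : (1:ℝ) ∈ Icc (0:ℝ) 1 := ⟨zero_le_one, le_refl 1⟩
  refine ⟨?_, hsm.injOn, ?_⟩
  · intro θ hθ
    constructor
    · rw [← h0]; exact hsm.monotoneOn hmem0 hθ hθ.1
    · rw [← h1]; exact hsm.monotoneOn hθ hmem1 hθ.2
  · have := intermediate_value_Icc (zero_le_one) hc
    rw [h0, h1] at this
    exact this

/-- Main approximation lemma: perturbing a monotone surjective reparameterization
by a convex combination with the linear one gives a strictly monotone bijection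
close to the original. -/
private lemma approx {a b : ℝ} (hab : a < b) {α : ℝ → ℝ} {lam : ℝ}
    (hc : ContinuousOn α (Icc 0 1)) (hm : MonotoneOn α (Icc 0 1))
    (hmap : MapsTo α (Icc 0 1) (Icc a b)) (hs : SurjOn α (Icc 0 1) (Icc a b))
    (hl0 : 0 < lam) (hl1 : lam ≤ 1) :
    ContinuousOn (fun θ => (1 - lam) * α θ + lam * (a + (b - a) * θ)) (Icc 0 1) ∧
    StrictMonoOn (fun θ => (1 - lam) * α θ + lam * (a + (b - a) * θ)) (Icc 0 1) ∧
    BijOn (fun θ => (1 - lam) * α θ + lam * (a + (b - a) * θ)) (Icc 0 1) (Icc a b) ∧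
    ∀ θ ∈ Icc (0:ℝ) 1,
      |(1 - lam) * α θ + lam * (a + (b - a) * θ) - α θ| ≤ lam * (b - a) := by
  set β : ℝ → ℝ := fun θ => (1 - lam) * α θ + lam * (a + (b - a) * θ) with hβ
  have hmem0 : (0:ℝ) ∈ Icc (0:ℝ) 1 := ⟨le_refl 0, zero_le_one⟩
  have hmem1 : (1:ℝ) ∈ Icc (0:ℝ) 1 := ⟨zero_le_one, le_refl 1⟩
  -- endpoint values of α
  have hα0 : α 0 = a := by
    obtain ⟨t, ht, hta⟩ := hs ⟨le_refl a, hab.le⟩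
    have h1 : α 0 ≤ α t := hm hmem0 ht ht.1
    have h2 : a ≤ α 0 := (hmap hmem0).1
    rw [hta] at h1
    linarith
  have hα1 : α 1 = b := by
    obtain ⟨t, ht, htb⟩ := hs ⟨hab.le, le_refl b⟩
    have h1 : α t ≤ α 1 := hm ht hmem1 ht.2
    have h2 : α 1 ≤ b := (hmap hmem1).2
    rw [htb] at h1
    linarith
  have hcβ : ContinuousOn β (Icc 0 1) :=
    (continuousOn_const.mul hc).add
      ((continuous_const.add (continuous_const.mul continuous_id)).continuousOn.const_smul lam)
  have hsmβ : StrictMonoOn β (Icc 0 1) := by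
    intro x hx y hy hxy
    have h1 : (1 - lam) * α x ≤ (1 - lam) * α y :=
      mul_le_mul_of_nonneg_left (hm hx hy hxy.le) (by linarith)
    have h2 : lam * (a + (b - a) * x) < lam * (a + (b - a) * y) := by
      have : (b - a) * x < (b - a) * y := by nlinarith
      nlinarith
    simp only [hβ]
    linarith
  have hβ0 : β 0 = a := by simp [hβ, hα0]; ring
  have hβ1 : β 1 = b := by simp [hβ, hα1]; ring
  refine ⟨hcβ, hsmβ, bijOn_of_endpoints hcβ hsmβ hβ0 hβ1, ?_⟩
  intro θ hθ
  have hαθ := hmap hθ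
  have hL : a + (b - a) * θ ∈ Icc a b := by
    constructor <;> nlinarith [hθ.1, hθ.2]
  have heq : (1 - lam) * α θ + lam * (a + (b - a) * θ) - α θ
      = lam * ((a + (b - a) * θ) - α θ) := by ring
  rw [heq, abs_mul, abs_of_pos hl0]
  apply mul_le_mul_of_nonneg_left _ hl0.le
  rw [abs_le]
  constructor
  · linarith [hL.1, hαθ.2]
  · linarith [hL.2, hαθ.1]

/-- The non-bijective Fréchet distance (over continuous non-decreasing surjective
reparameterizations) equals the Fréchet distance over continuous strictly increasing
bijective reparameterizations, for curves on nondegenerate intervals. -/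
theorem frechet_nonbijective_eq_bijective {V : Type*} [NormedAddCommGroup V]
    (af bf ag bg : ℝ) (h1 : af < bf) (h2 : ag < bg)
    (f g : ℝ → V)
    (hf : ContinuousOn f (Icc af bf)) (hg : ContinuousOn g (Icc ag bg)) :
    sInf {v : ℝ | ∃ αf αg : ℝ → ℝ,
        ContinuousOn αf (Icc 0 1) ∧ MonotoneOn αf (Icc 0 1) ∧
        Set.MapsTo αf (Icc 0 1) (Icc af bf) ∧ Set.SurjOn αf (Icc 0 1) (Icc af bf) ∧
        ContinuousOn αg (Icc 0 1) ∧ MonotoneOn αg (Icc 0 1) ∧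
        Set.MapsTo αg (Icc 0 1) (Icc ag bg) ∧ Set.SurjOn αg (Icc 0 1) (Icc ag bg) ∧
        v = sSup ((fun θ => ‖f (αf θ) - g (αg θ)‖) '' Icc 0 1)}
      =
    sInf {v : ℝ | ∃ αf αg : ℝ → ℝ,
        ContinuousOn αf (Icc 0 1) ∧ StrictMonoOn αf (Icc 0 1) ∧
        Set.BijOn αf (Icc 0 1) (Icc af bf) ∧
        ContinuousOn αg (Icc 0 1) ∧ StrictMonoOn αg (Icc 0 1) ∧
        Set.BijOn αg (Icc 0 1) (Icc ag bg) ∧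
        v = sSup ((fun θ => ‖f (αf θ) - g (αg θ)‖) '' Icc 0 1)} := by
  set Snb := {v : ℝ | ∃ αf αg : ℝ → ℝ,
        ContinuousOn αf (Icc 0 1) ∧ MonotoneOn αf (Icc 0 1) ∧
        Set.MapsTo αf (Icc 0 1) (Icc af bf) ∧ Set.SurjOn αf (Icc 0 1) (Icc af bf) ∧
        ContinuousOn αg (Icc 0 1) ∧ MonotoneOn αg (Icc 0 1) ∧
        Set.MapsTo αg (Icc 0 1) (Icc ag bg) ∧ Set.SurjOn αg (Icc 0 1) (Icc ag bg) ∧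
        v = sSup ((fun θ => ‖f (αf θ) - g (αg θ)‖) '' Icc 0 1)} with hSnb
  set Sb := {v : ℝ | ∃ αf αg : ℝ → ℝ,
        ContinuousOn αf (Icc 0 1) ∧ StrictMonoOn αf (Icc 0 1) ∧
        Set.BijOn αf (Icc 0 1) (Icc af bf) ∧
        ContinuousOn αg (Icc 0 1) ∧ StrictMonoOn αg (Icc 0 1) ∧
        Set.BijOn αg (Icc 0 1) (Icc ag bg) ∧
        v = sSup ((fun θ => ‖f (αf θ) - g (αg θ)‖) '' Icc 0 1)} with hSb
  -- lower bounds
  have hbdd_nb : BddBelow Snb := by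
    refine ⟨0, fun v hv => ?_⟩
    obtain ⟨αf, αg, hcf, _, hmf, _, hcg, _, hmg, _, hv⟩ := hv
    rw [hv]; exact img_sSup_nonneg hf hg hcf hmf hcg hmg
  have hbdd_b : BddBelow Sb := by
    refine ⟨0, fun v hv => ?_⟩
    obtain ⟨αf, αg, hcf, _, hbf, hcg, _, hbg, hv⟩ := hv
    rw [hv]; exact img_sSup_nonneg hf hg hcf hbf.mapsTo hcg hbg.mapsTo
  -- Sb is nonempty (use linear reparameterizations)
  have hSb_ne : Sb.Nonempty := by
    set Lf : ℝ → ℝ := fun θ => af + (bf - af) * θ with hLf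
    set Lg : ℝ → ℝ := fun θ => ag + (bg - ag) * θ with hLg
    have hcLf : ContinuousOn Lf (Icc 0 1) :=
      (continuous_const.add (continuous_const.mul continuous_id)).continuousOn
    have hcLg : ContinuousOn Lg (Icc 0 1) :=
      (continuous_const.add (continuous_const.mul continuous_id)).continuousOn
    have hsmLf : StrictMonoOn Lf (Icc 0 1) := fun x _ y _ hxy => by
      simp only [hLf]; nlinarith
    have hsmLg : StrictMonoOn Lg (Icc 0 1) := fun x _ y _ hxy => by
      simp only [hLg]; nlinarith
    have hbLf := bijOn_of_endpoints (a := af) (b := bf) hcLf hsmLf (by simp [hLf]) (by simp [hLf])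
    have hbLg := bijOn_of_endpoints (a := ag) (b := bg) hcLg hsmLg (by simp [hLg]) (by simp [hLg])
    exact ⟨_, Lf, Lg, hcLf, hsmLf, hbLf, hcLg, hsmLg, hbLg, rfl⟩
  -- easy direction: Sb ⊆ Snb
  have hsub : Sb ⊆ Snb := by
    intro v hv
    obtain ⟨αf, αg, hcf, hsmf, hbf, hcg, hsmg, hbg, hv⟩ := hv
    exact ⟨αf, αg, hcf, hsmf.monotoneOn, hbf.mapsTo, hbf.surjOn,
      hcg, hsmg.monotoneOn, hbg.mapsTo, hbg.surjOn, hv⟩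
  have hSnb_ne : Snb.Nonempty := hSb_ne.mono hsub
  apply le_antisymm
  · exact csInf_le_csInf hbdd_nb hSb_ne hsub
  -- hard direction
  refine le_csInf hSnb_ne fun v hv => ?_
  apply le_of_forall_pos_le_add
  intro ε hε
  obtain ⟨αf, αg, hcf, hmonf, hmapf, hsf, hcg, hmong, hmapg, hsg, hv⟩ := hv
  -- uniform continuity of f and g
  obtain ⟨δf, hδf0, hδf⟩ := Metric.uniformContinuousOn_iff.mp
    (isCompact_Icc.uniformContinuousOn_of_continuous hf) (ε/2) (by linarith)
  obtain ⟨δg, hδg0, hδg⟩ := Metric.uniformContinuousOn_iff.mp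
    (isCompact_Icc.uniformContinuousOn_of_continuous hg) (ε/2) (by linarith)
  -- choose lambda
  set lam := min 1 (min (δf / (2 * (bf - af))) (δg / (2 * (bg - ag)))) with hlam
  have hl0 : 0 < lam := by
    apply lt_min one_pos
    exact lt_min (div_pos hδf0 (by linarith)) (div_pos hδg0 (by linarith))
  have hl1 : lam ≤ 1 := min_le_left _ _
  have hlf : lam * (bf - af) < δf := by
    have : lam ≤ δf / (2 * (bf - af)) := le_trans (min_le_right _ _) (min_le_left _ _)
    have hpos : (0:ℝ) < bf - af := by linarith
    calc lam * (bf - af) ≤ (δf / (2 * (bf - af))) * (bf - af) :=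
          mul_le_mul_of_nonneg_right this hpos.le
      _ = δf / 2 := by field_simp
      _ < δf := by linarith
  have hlg : lam * (bg - ag) < δg := by
    have : lam ≤ δg / (2 * (bg - ag)) := le_trans (min_le_right _ _) (min_le_right _ _)
    have hpos : (0:ℝ) < bg - ag := by linarith
    calc lam * (bg - ag) ≤ (δg / (2 * (bg - ag))) * (bg - ag) :=
          mul_le_mul_of_nonneg_right this hpos.le
      _ = δg / 2 := by field_simp
      _ < δg := by linarith
  obtain ⟨hcF, hsmF, hbF, hcloseF⟩ := approx h1 hcf hmonf hmapf hsf hl0 hl1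
  obtain ⟨hcG, hsmG, hbG, hcloseG⟩ := approx h2 hcg hmong hmapg hsg hl0 hl1
  set βf : ℝ → ℝ := fun θ => (1 - lam) * αf θ + lam * (af + (bf - af) * θ) with hβf
  set βg : ℝ → ℝ := fun θ => (1 - lam) * αg θ + lam * (ag + (bg - ag) * θ) with hβg
  have hmem : sSup ((fun θ => ‖f (βf θ) - g (βg θ)‖) '' Icc 0 1) ∈ Sb :=
    ⟨βf, βg, hcF, hsmF, hbF, hcG, hsmG, hbG, rfl⟩
  refine le_trans (csInf_le hbdd_b hmem) ?_
  -- bound the new sup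
  have hv0 : 0 ≤ v := by
    rw [hv]; exact img_sSup_nonneg hf hg hcf hmapf hcg hmapg
  apply Real.sSup_le _ (by linarith)
  rintro x ⟨θ, hθ, rfl⟩
  have hbfθ := hbF.mapsTo hθ
  have hbgθ := hbG.mapsTo hθ
  have hafθ := hmapf hθ
  have hagθ := hmapg hθ
  have hdf : dist (f (βf θ)) (f (αf θ)) < ε/2 := by
    apply hδf _ hbfθ _ hafθ
    rw [Real.dist_eq]
    exact lt_of_le_of_lt (hcloseF θ hθ) hlf
  have hdg : dist (g (αg θ)) (g (βg θ)) < ε/2 := by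
    apply hδg _ hagθ _ hbgθ
    rw [Real.dist_eq, abs_sub_comm]
    exact lt_of_le_of_lt (hcloseG θ hθ) hlg
  have hmid : ‖f (αf θ) - g (αg θ)‖ ≤ v := by
    rw [hv]
    exact le_csSup (img_bddAbove hf hg hcf hmapf hcg hmapg) ⟨θ, hθ, rfl⟩
  have htri := dist_triangle4 (f (βf θ)) (f (αf θ)) (g (αg θ)) (g (βg θ))
  simp only [dist_eq_norm] at htri hdf hdg
  linarith
end

section
/- In ℝⁿ with the Euclidean norm, for a point s and distinct points z ≠ z', let l(λ) = z + λ(z'−z) and for δ ≥ dist(s, segment(z,z')) define h(δ) = {λ ∈ [0,1] : ‖l(λ) − s‖ ≤ δ}. Then: (1) h(δ) is a closed interval; (2) h_max(δ) = sup h(δ) is continuous and strictly increasing on [dist(s, segment(z,z')), dist(s,z')], and if h_max(δ) = λ then ‖l(λ) − s‖ = δ; (3) symmetrically, h_min(δ) = inf h(δ) is continuous and strictly decreasing on [dist(s, segment(z,z')), dist(s,z)]. -/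
open Set Metric

private lemma sq_le_iff_le' {a b : ℝ} (ha : 0 ≤ a) (hb : 0 ≤ b) :
    a ^ 2 ≤ b ^ 2 ↔ a ≤ b :=
  ⟨fun h => le_of_pow_le_pow_left₀ two_ne_zero hb h, fun h => pow_le_pow_left₀ ha h 2⟩

private lemma quad_aux (g : ℝ → ℝ) (B A lp d0 : ℝ) (hB : 0 < B)
    (hg : ∀ t, 0 ≤ g t) (hsq : ∀ t, (g t) ^ 2 = B * (t - lp) ^ 2 + A)
    (hd0 : 0 ≤ d0)
    (hlb : ∀ t ∈ Icc (0:ℝ) 1, d0 ≤ g t)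
    (hex : ∃ t ∈ Icc (0:ℝ) 1, g t = d0) :
    let h : ℝ → Set ℝ := fun δ => {t | t ∈ Icc (0:ℝ) 1 ∧ g t ≤ δ}
    let hmax : ℝ → ℝ := fun δ => sSup (h δ)
    let hmin : ℝ → ℝ := fun δ => sInf (h δ)
    (∀ δ : ℝ, d0 ≤ δ → ∃ a b : ℝ, h δ = Icc a b) ∧
    (ContinuousOn hmax (Icc d0 (g 1)) ∧ StrictMonoOn hmax (Icc d0 (g 1)) ∧
      ∀ δ ∈ Icc d0 (g 1), g (hmax δ) = δ) ∧
    (ContinuousOn hmin (Icc d0 (g 0)) ∧ StrictAntiOn hmin (Icc d0 (g 0)) ∧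
      ∀ δ ∈ Icc d0 (g 0), g (hmin δ) = δ) := by
  intro h hmax hmin
  obtain ⟨t₀, ht₀, hgt₀⟩ := hex
  have hA : A ≤ d0 ^ 2 := by
    have h1 := hsq t₀
    nlinarith [sq_nonneg (t₀ - lp), hgt₀]
  set r : ℝ → ℝ := fun δ => Real.sqrt ((δ ^ 2 - A) / B) with hrdef
  have hAδ : ∀ δ : ℝ, d0 ≤ δ → A ≤ δ ^ 2 := by
    intro δ hδ
    exact hA.trans (pow_le_pow_left₀ hd0 hδ 2)
  have hrnn : ∀ δ, 0 ≤ r δ := fun δ => Real.sqrt_nonneg _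
  have hrsq : ∀ δ : ℝ, d0 ≤ δ → (r δ) ^ 2 = (δ ^ 2 - A) / B := by
    intro δ hδ
    exact Real.sq_sqrt (div_nonneg (by linarith [hAδ δ hδ]) hB.le)
  -- membership characterization
  have key : ∀ δ : ℝ, d0 ≤ δ → ∀ t : ℝ, (g t ≤ δ ↔ lp - r δ ≤ t ∧ t ≤ lp + r δ) := by
    intro δ hδ t
    have h0δ : 0 ≤ δ := hd0.trans hδ
    have habs : (lp - r δ ≤ t ∧ t ≤ lp + r δ) ↔ |t - lp| ≤ r δ := by
      rw [abs_le]
      constructor <;> rintro ⟨h1, h2⟩ <;> exact ⟨by linarith, by linarith⟩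
    rw [habs, ← sq_le_iff_le' (hg t) h0δ, ← sq_le_iff_le' (abs_nonneg _) (hrnn δ),
      sq_abs, hsq t, hrsq δ hδ, le_div_iff₀ hB]
    constructor <;> intro hh <;> nlinarith
  have hIcc : ∀ δ : ℝ, d0 ≤ δ →
      h δ = Icc (max 0 (lp - r δ)) (min 1 (lp + r δ)) := by
    intro δ hδ
    ext t
    simp only [h, mem_setOf_eq, mem_Icc, max_le_iff, le_min_iff, key δ hδ t]
    tauto
  have ht₀mem : ∀ δ : ℝ, d0 ≤ δ → t₀ ∈ h δ := fun δ hδ => ⟨ht₀, by rw [hgt₀]; exact hδ⟩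
  have hab : ∀ δ : ℝ, d0 ≤ δ → max 0 (lp - r δ) ≤ min 1 (lp + r δ) := by
    intro δ hδ
    have := (hIcc δ hδ) ▸ ht₀mem δ hδ
    exact this.1.trans this.2
  have hmax_eq : ∀ δ : ℝ, d0 ≤ δ → hmax δ = min 1 (lp + r δ) := by
    intro δ hδ
    show sSup (h δ) = _
    rw [hIcc δ hδ, csSup_Icc (hab δ hδ)]
  have hmin_eq : ∀ δ : ℝ, d0 ≤ δ → hmin δ = max 0 (lp - r δ) := by
    intro δ hδ
    show sInf (h δ) = _
    rw [hIcc δ hδ, csInf_Icc (hab δ hδ)]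
  have hval : ∀ δ : ℝ, d0 ≤ δ → ∀ t, (t - lp) ^ 2 = (r δ) ^ 2 → g t = δ := by
    intro δ hδ t ht
    have h0δ : 0 ≤ δ := hd0.trans hδ
    have hgg : (g t) ^ 2 = δ ^ 2 := by
      rw [hsq t, ht, hrsq δ hδ]
      field_simp
      ring
    calc g t = Real.sqrt ((g t) ^ 2) := (Real.sqrt_sq (hg t)).symm
      _ = Real.sqrt (δ ^ 2) := by rw [hgg]
      _ = δ := Real.sqrt_sq h0δ
  have hrmono : ∀ x y : ℝ, d0 ≤ x → x < y → r x < r y := by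
    intro x y hx hxy
    apply Real.sqrt_lt_sqrt (div_nonneg (by linarith [hAδ x hx]) hB.le)
    have hx2 : x ^ 2 < y ^ 2 := by nlinarith [hd0.trans hx]
    exact (div_lt_div_iff_of_pos_right hB).mpr (by linarith)
  have hrcont : Continuous (fun δ : ℝ => Real.sqrt ((δ ^ 2 - A) / B)) := by
    apply Real.continuous_sqrt.comp
    exact ((continuous_pow 2).sub continuous_const).div_const B
  have hd0g1 : d0 ≤ g 1 := hlb 1 ⟨zero_le_one, le_refl 1⟩
  have hd0g0 : d0 ≤ g 0 := hlb 0 ⟨le_refl 0, zero_le_one⟩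
  refine ⟨fun δ hδ => ⟨_, _, hIcc δ hδ⟩, ?_, ?_⟩
  · -- hmax part
    by_cases hlp : lp ≤ 1
    · have hr_le : ∀ δ ∈ Icc d0 (g 1), r δ ≤ 1 - lp := by
        intro δ hδ
        have h1 := hδ.1
        have h2 := hδ.2
        have hsq1 := hsq 1
        have : (r δ) ^ 2 ≤ (1 - lp) ^ 2 := by
          rw [hrsq δ h1, div_le_iff₀ hB]
          have : δ ^ 2 ≤ (g 1) ^ 2 := pow_le_pow_left₀ (hd0.trans h1) h2 2
          nlinarith
        exact le_of_pow_le_pow_left₀ two_ne_zero (by linarith) this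
      have heq : ∀ δ ∈ Icc d0 (g 1), hmax δ = lp + r δ := by
        intro δ hδ
        rw [hmax_eq δ hδ.1, min_eq_right (by linarith [hr_le δ hδ])]
      refine ⟨?_, ?_, ?_⟩
      · exact ContinuousOn.congr (continuous_const.add hrcont).continuousOn heq
      · intro x hx y hy hxy
        rw [heq x hx, heq y hy]
        have := hrmono x y hx.1 hxy
        linarith
      · intro δ hδ
        rw [heq δ hδ]
        exact hval δ hδ.1 _ (by ring)
    · -- lp > 1 : degenerate interval
      push_neg at hlp
      have hg1d0 : g 1 = d0 := by
        refine le_antisymm ?_ hd0g1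
        rw [← hgt₀]
        have h1 := hsq 1
        have h2 := hsq t₀
        apply le_of_pow_le_pow_left₀ two_ne_zero (hg t₀)
        nlinarith [ht₀.2, mul_nonneg hB.le (mul_nonneg (by linarith [ht₀.2] : (0:ℝ) ≤ 1 - t₀) (by linarith [ht₀.2] : (0:ℝ) ≤ 2*lp - t₀ - 1))]
      have hset : Icc d0 (g 1) = {d0} := by rw [hg1d0, Icc_self]
      rw [hset]
      refine ⟨continuousOn_singleton _ _, ?_, ?_⟩
      · intro x hx y hy hxy
        rw [mem_singleton_iff] at hx hy
        rw [hx, hy] at hxy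
        exact absurd hxy (lt_irrefl _)
      · intro δ hδ
        rw [mem_singleton_iff] at hδ
        rw [hδ]
        have hr0 : r d0 = lp - 1 := by
          have hq : (d0 ^ 2 - A) / B = (lp - 1) ^ 2 := by
            rw [div_eq_iff hB.ne']
            have h1 := hsq 1
            rw [hg1d0] at h1
            linear_combination h1
          show Real.sqrt ((d0 ^ 2 - A) / B) = lp - 1
          rw [hq, Real.sqrt_sq (by linarith)]
        rw [hmax_eq d0 le_rfl, hr0, min_eq_left (by linarith)]
        rw [← hg1d0]
  · -- hmin part
    by_cases hlp : 0 ≤ lp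
    · have hr_le : ∀ δ ∈ Icc d0 (g 0), r δ ≤ lp := by
        intro δ hδ
        have h1 := hδ.1
        have h2 := hδ.2
        have hsq0 := hsq 0
        have : (r δ) ^ 2 ≤ lp ^ 2 := by
          rw [hrsq δ h1, div_le_iff₀ hB]
          have : δ ^ 2 ≤ (g 0) ^ 2 := pow_le_pow_left₀ (hd0.trans h1) h2 2
          nlinarith
        exact le_of_pow_le_pow_left₀ two_ne_zero hlp this
      have heq : ∀ δ ∈ Icc d0 (g 0), hmin δ = lp - r δ := by
        intro δ hδ
        rw [hmin_eq δ hδ.1, max_eq_right (by linarith [hr_le δ hδ])]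
      refine ⟨?_, ?_, ?_⟩
      · exact ContinuousOn.congr (continuous_const.sub hrcont).continuousOn heq
      · intro x hx y hy hxy
        rw [heq x hx, heq y hy]
        have := hrmono x y hx.1 hxy
        linarith
      · intro δ hδ
        rw [heq δ hδ]
        exact hval δ hδ.1 _ (by ring)
    · push_neg at hlp
      have hg0d0 : g 0 = d0 := by
        refine le_antisymm ?_ hd0g0
        rw [← hgt₀]
        have h1 := hsq 0
        have h2 := hsq t₀
        apply le_of_pow_le_pow_left₀ two_ne_zero (hg t₀)
        nlinarith [ht₀.1, mul_nonneg hB.le (mul_nonneg (by linarith [ht₀.1] : (0:ℝ) ≤ t₀ - 0) (by linarith [ht₀.1] : (0:ℝ) ≤ t₀ + 0 - 2*lp))]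
      have hset : Icc d0 (g 0) = {d0} := by rw [hg0d0, Icc_self]
      rw [hset]
      refine ⟨continuousOn_singleton _ _, ?_, ?_⟩
      · intro x hx y hy hxy
        rw [mem_singleton_iff] at hx hy
        rw [hx, hy] at hxy
        exact absurd hxy (lt_irrefl _)
      · intro δ hδ
        rw [mem_singleton_iff] at hδ
        rw [hδ]
        have hr0 : r d0 = -lp := by
          have hq : (d0 ^ 2 - A) / B = lp ^ 2 := by
            rw [div_eq_iff hB.ne']
            have h1 := hsq 0
            rw [hg0d0] at h1
            linear_combination h1
          show Real.sqrt ((d0 ^ 2 - A) / B) = -lp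
          rw [hq, Real.sqrt_sq_eq_abs, abs_of_neg hlp]
        rw [hmin_eq d0 le_rfl, hr0, max_eq_left (by linarith)]
        rw [← hg0d0]

/-- Properties of the feasible-parameter set `h(δ) = {λ ∈ [0,1] : ‖l(λ) − s‖ ≤ δ}` for a
point `s` and the segment `l(λ) = z + λ(z'−z)` in Euclidean space: it is a closed
interval; its sup is continuous, strictly increasing and attains the boundary value;
symmetrically for its inf. -/
theorem ball_segment_intersection_properties {n : ℕ}
    (s z z' : EuclideanSpace ℝ (Fin n)) (hzz : z ≠ z') :
    let l : ℝ → EuclideanSpace ℝ (Fin n) := fun lam => z + lam • (z' - z)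
    let d0 : ℝ := Metric.infDist s (segment ℝ z z')
    let h : ℝ → Set ℝ := fun δ => {lam | lam ∈ Icc (0:ℝ) 1 ∧ ‖l lam - s‖ ≤ δ}
    let hmax : ℝ → ℝ := fun δ => sSup (h δ)
    let hmin : ℝ → ℝ := fun δ => sInf (h δ)
    (∀ δ : ℝ, d0 ≤ δ → ∃ a b : ℝ, h δ = Icc a b) ∧
    (ContinuousOn hmax (Icc d0 (dist s z')) ∧
     StrictMonoOn hmax (Icc d0 (dist s z')) ∧
     ∀ δ ∈ Icc d0 (dist s z'), ‖l (hmax δ) - s‖ = δ) ∧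
    (ContinuousOn hmin (Icc d0 (dist s z)) ∧
     StrictAntiOn hmin (Icc d0 (dist s z)) ∧
     ∀ δ ∈ Icc d0 (dist s z), ‖l (hmin δ) - s‖ = δ) := by
  intro l d0 h hmax hmin
  set u : EuclideanSpace ℝ (Fin n) := z - s with hu
  set v : EuclideanSpace ℝ (Fin n) := z' - z with hv
  have hv0 : v ≠ 0 := sub_ne_zero.mpr (Ne.symm hzz)
  set B : ℝ := ‖v‖ ^ 2 with hBdef
  have hB : 0 < B := pow_pos (norm_pos_iff.mpr hv0) 2
  set C : ℝ := inner ℝ u v with hC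
  set lp : ℝ := -C / B with hlp
  set A : ℝ := ‖u‖ ^ 2 - C ^ 2 / B with hA
  have hdiff : ∀ t : ℝ, l t - s = u + t • v := by
    intro t
    simp only [l, hu, hv]
    abel
  have hsq : ∀ t : ℝ, ‖l t - s‖ ^ 2 = B * (t - lp) ^ 2 + A := by
    intro t
    rw [hdiff t, norm_add_sq_real, real_inner_smul_right, norm_smul, mul_pow]
    simp only [Real.norm_eq_abs, sq_abs]
    rw [hA, hlp, hC, hBdef]
    have hBne : ‖v‖ ^ 2 ≠ 0 := ne_of_gt hB
    field_simp
    ring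
  have hseg : segment ℝ z z' = l '' Icc 0 1 := by
    rw [segment_eq_image' ℝ z z']
  have hlcont : Continuous l := by
    apply continuous_const.add
    exact continuous_id.smul continuous_const
  have hlb : ∀ t ∈ Icc (0:ℝ) 1, d0 ≤ ‖l t - s‖ := by
    intro t ht
    have hmem : l t ∈ segment ℝ z z' := hseg ▸ mem_image_of_mem _ ht
    calc d0 ≤ dist s (l t) := infDist_le_dist_of_mem hmem
      _ = ‖l t - s‖ := dist_eq_norm' s (l t)
  have hex : ∃ t ∈ Icc (0:ℝ) 1, ‖l t - s‖ = d0 := by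
    have hcpt : IsCompact (segment ℝ z z') := hseg ▸ isCompact_Icc.image hlcont
    obtain ⟨y, hy, hdy⟩ := hcpt.exists_infDist_eq_dist
      ⟨z, left_mem_segment ℝ z z'⟩ s
    rw [hseg] at hy
    obtain ⟨t, ht, rfl⟩ := hy
    exact ⟨t, ht, by rw [← dist_eq_norm' s (l t), ← hdy]⟩
  obtain ⟨P1, P2, P3⟩ := quad_aux (fun t => ‖l t - s‖) B A lp d0 hB
    (fun t => norm_nonneg _) hsq infDist_nonneg hlb hex
  have hz' : dist s z' = ‖l 1 - s‖ := by
    rw [dist_eq_norm' s z']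
    congr 1
    simp [l]
  have hz : dist s z = ‖l 0 - s‖ := by
    rw [dist_eq_norm' s z]
    congr 1
    simp [l]
  exact ⟨P1, hz' ▸ P2, hz ▸ P3⟩
end

section
/- Let s₁, s₂, z, z' be points in ℝⁿ with the Euclidean norm, and let δ* = min{δ ≥ 0 : B(s₁,δ) ∩ B(s₂,δ) ∩ segment(z,z') ≠ ∅}. If δ* is neither equal to dist(s₁, segment(z,z')) nor to dist(s₂, segment(z,z')), then δ* = min{δ ≥ 0 : Sphere(s₁,δ) ∩ Sphere(s₂,δ) ∩ segment(z,z') ≠ ∅} (this latter minimum exists), and for δ = δ* the intersection Sphere(s₁,δ*) ∩ Sphere(s₂,δ*) ∩ segment(z,z') contains exactly one point. -/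
open Set Metric

/-- Auxiliary: if `x ∈ S` is strictly inside the first ball and the infimum distance from
`s2` to `S` is `< δ`, then `δ` is not a lower bound of the ball-intersection set. -/
private lemma aux_not_lb {E : Type*} [NormedAddCommGroup E] [NormedSpace ℝ E]
    {s1 s2 : E} {S : Set E} (hS : Convex ℝ S) {δ : ℝ}
    (hlb : ∀ δ' ∈ {d : ℝ | 0 ≤ d ∧
      (Metric.closedBall s1 d ∩ Metric.closedBall s2 d ∩ S).Nonempty}, δ ≤ δ')
    {x : E} (hxS : x ∈ S) (hx1 : dist x s1 < δ) (hx2 : dist x s2 ≤ δ)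
    (hinf : infDist s2 S < δ) : False := by
  have hSne : S.Nonempty := ⟨x, hxS⟩
  obtain ⟨y, hyS, hy2⟩ := (Metric.infDist_lt_iff hSne).1 hinf
  rw [dist_comm] at hy2
  set t : ℝ := min 1 ((δ - dist x s1) / (2 * (dist y s1 + 1))) with ht
  have hd1 : (0:ℝ) < δ - dist x s1 := by linarith
  have hden : (0:ℝ) < 2 * (dist y s1 + 1) := by positivity
  have ht0 : 0 < t := lt_min one_pos (div_pos hd1 hden)
  have ht1 : t ≤ 1 := min_le_left _ _
  set u : E := (1 - t) • x + t • y with hu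
  have huS : u ∈ S := hS hxS hyS (by linarith) (le_of_lt ht0) (by ring)
  have hc1 : dist u s1 ≤ (1 - t) * dist x s1 + t * dist y s1 :=
    (convexOn_dist s1 hS).2 hxS hyS (by linarith) (le_of_lt ht0) (by ring)
  have hc2 : dist u s2 ≤ (1 - t) * dist x s2 + t * dist y s2 :=
    (convexOn_dist s2 hS).2 hxS hyS (by linarith) (le_of_lt ht0) (by ring)
  have htsmall : t ≤ (δ - dist x s1) / (2 * (dist y s1 + 1)) := min_le_right _ _
  have h1 : dist u s1 < δ := by
    have h2 : t * (dist y s1 + 1) ≤ (δ - dist x s1) / 2 := by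
      rw [le_div_iff₀ hden] at htsmall
      nlinarith [dist_nonneg (x := y) (y := s1)]
    have h3 : t * dist y s1 ≤ t * (dist y s1 + 1) := by nlinarith
    have h4 : (1 - t) * dist x s1 ≤ dist x s1 := by
      nlinarith [dist_nonneg (x := x) (y := s1)]
    linarith
  have h2 : dist u s2 < δ := by
    have : (1 - t) * dist x s2 + t * dist y s2 < (1 - t) * δ + t * δ := by nlinarith
    nlinarith
  have hmem : max (dist u s1) (dist u s2) ∈ {d : ℝ | 0 ≤ d ∧
      (Metric.closedBall s1 d ∩ Metric.closedBall s2 d ∩ S).Nonempty} := by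
    refine ⟨le_trans dist_nonneg (le_max_left _ _), u, ⟨?_, ?_⟩, huS⟩
    · exact mem_closedBall.2 (le_max_left _ _)
    · exact mem_closedBall.2 (le_max_right _ _)
  have := hlb _ hmem
  have := max_lt h1 h2
  linarith

/-- If the least `δ` making the two closed Euclidean balls meet the segment is neither
`dist(s₁, segment)` nor `dist(s₂, segment)`, then it coincides with the least `δ` making
the two *spheres* meet the segment, and for this `δ` the sphere–sphere–segment
intersection is a single point. -/
theorem balls_to_spheres_least_delta {n : ℕ}
    (s1 s2 z z' : EuclideanSpace ℝ (Fin n)) (δstar : ℝ)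
    (hstar : IsLeast {δ : ℝ | 0 ≤ δ ∧
      (Metric.closedBall s1 δ ∩ Metric.closedBall s2 δ ∩ segment ℝ z z').Nonempty} δstar)
    (hne1 : δstar ≠ Metric.infDist s1 (segment ℝ z z'))
    (hne2 : δstar ≠ Metric.infDist s2 (segment ℝ z z')) :
    IsLeast {δ : ℝ | 0 ≤ δ ∧
        (Metric.sphere s1 δ ∩ Metric.sphere s2 δ ∩ segment ℝ z z').Nonempty} δstar ∧
    (∃! w : EuclideanSpace ℝ (Fin n),
        w ∈ Metric.sphere s1 δstar ∩ Metric.sphere s2 δstar ∩ segment ℝ z z') := by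
  obtain ⟨⟨hδ0, x, ⟨hxb1, hxb2⟩, hxS⟩, hlb⟩ := hstar
  set S : Set (EuclideanSpace ℝ (Fin n)) := segment ℝ z z' with hSdef
  have hS : Convex ℝ S := convex_segment z z'
  have hx1 : dist x s1 ≤ δstar := mem_closedBall.1 hxb1
  have hx2 : dist x s2 ≤ δstar := mem_closedBall.1 hxb2
  -- the max of the two distances at x is exactly δstar
  have hmax : max (dist x s1) (dist x s2) = δstar := by
    refine le_antisymm (max_le hx1 hx2) ?_
    refine hlb ⟨le_trans dist_nonneg (le_max_left _ _), x, ⟨?_, ?_⟩, hxS⟩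
    · exact mem_closedBall.2 (le_max_left _ _)
    · exact mem_closedBall.2 (le_max_right _ _)
  have hinf1 : infDist s1 S < δstar :=
    lt_of_le_of_ne (infDist_le_dist_of_mem (by exact hxS) |>.trans (by rw [dist_comm]; exact hx1))
      (Ne.symm hne1)
  have hinf2 : infDist s2 S < δstar :=
    lt_of_le_of_ne (infDist_le_dist_of_mem (by exact hxS) |>.trans (by rw [dist_comm]; exact hx2))
      (Ne.symm hne2)
  -- both distances at x equal δstar
  have heq1 : dist x s1 = δstar := by
    by_contra h
    have h1 : dist x s1 < δstar := lt_of_le_of_ne hx1 h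
    exact aux_not_lb hS hlb hxS h1 hx2 hinf2
  have heq2 : dist x s2 = δstar := by
    by_contra h
    have h2 : dist x s2 < δstar := lt_of_le_of_ne hx2 h
    refine aux_not_lb (s1 := s2) (s2 := s1) hS ?_ hxS h2 hx1 hinf1
    intro δ' ⟨hδ', w, ⟨hw2, hw1⟩, hwS⟩
    exact hlb ⟨hδ', w, ⟨hw1, hw2⟩, hwS⟩
  have hxmem : x ∈ Metric.sphere s1 δstar ∩ Metric.sphere s2 δstar ∩ S :=
    ⟨⟨mem_sphere.2 heq1, mem_sphere.2 heq2⟩, hxS⟩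
  -- any member of the sphere intersection equals x
  have huniq : ∀ w ∈ Metric.sphere s1 δstar ∩ Metric.sphere s2 δstar ∩ S, w = x := by
    rintro w ⟨⟨hw1, hw2⟩, hwS⟩
    by_contra hne
    rcases eq_or_lt_of_le hδ0 with h0 | hpos
    · -- δstar = 0 : both points equal s1
      have hw : w = s1 := by
        have := mem_sphere.1 hw1; rw [← h0] at this; exact dist_eq_zero.1 this
      have hx' : x = s1 := by
        rw [← h0] at heq1; exact dist_eq_zero.1 heq1
      exact hne (hw.trans hx'.symm)
    · have hδne : δstar ≠ 0 := ne_of_gt hpos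
      set m : EuclideanSpace ℝ (Fin n) := (1/2 : ℝ) • w + (1/2 : ℝ) • x with hm
      have hmS : m ∈ S := hS hwS hxS (by norm_num) (by norm_num) (by norm_num)
      have hm1 : dist m s1 < δstar := by
        have := (strictConvex_closedBall ℝ s1 δstar)
          (sphere_subset_closedBall hw1) (sphere_subset_closedBall (mem_sphere.2 heq1))
          hne (by norm_num : (0:ℝ) < 1/2) (by norm_num : (0:ℝ) < 1/2) (by norm_num)
        rw [interior_closedBall s1 hδne] at this
        exact mem_ball.1 this
      have hm2 : dist m s2 < δstar := by
        have := (strictConvex_closedBall ℝ s2 δstar)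
          (sphere_subset_closedBall hw2) (sphere_subset_closedBall (mem_sphere.2 heq2))
          hne (by norm_num : (0:ℝ) < 1/2) (by norm_num : (0:ℝ) < 1/2) (by norm_num)
        rw [interior_closedBall s2 hδne] at this
        exact mem_ball.1 this
      have hmem : max (dist m s1) (dist m s2) ∈ {d : ℝ | 0 ≤ d ∧
          (Metric.closedBall s1 d ∩ Metric.closedBall s2 d ∩ S).Nonempty} := by
        refine ⟨le_trans dist_nonneg (le_max_left _ _), m, ⟨?_, ?_⟩, hmS⟩
        · exact mem_closedBall.2 (le_max_left _ _)
        · exact mem_closedBall.2 (le_max_right _ _)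
      have := hlb hmem
      have := max_lt hm1 hm2
      linarith
  refine ⟨⟨⟨hδ0, x, hxmem⟩, ?_⟩, x, hxmem, huniq⟩
  rintro δ' ⟨hδ', w, ⟨hw1, hw2⟩, hwS⟩
  refine hlb ?_
  exact ⟨hδ', w, ⟨sphere_subset_closedBall hw1, sphere_subset_closedBall hw2⟩, hwS⟩
end

section
/- Helly's theorem in dimension one applied to intervals: let I₁, I₂, I₃, I₄ be closed intervals in ℝ such that every pairwise intersection I_i ∩ I_j (i ≠ j) is nonempty. Then I₁ ∩ I₂ ∩ I₃ ∩ I₄ is nonempty. Consequently, for the L₂-Skorokhod norm on ℝⁿ × ℝ, the least δ such that B((s₁,t₁),δ) ∩ B((s₂,t₂),δ) ∩ segment((z,t_z),(z',t_{z'})) ≠ ∅ equals the maximum over the six pairwise constraints of the corresponding least pairwise δ values. -/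
open Set

private lemma hellyFourIcc (a1 b1 a2 b2 a3 b3 a4 b4 : ℝ)
    (h12 : (Icc a1 b1 ∩ Icc a2 b2).Nonempty)
    (h13 : (Icc a1 b1 ∩ Icc a3 b3).Nonempty)
    (h14 : (Icc a1 b1 ∩ Icc a4 b4).Nonempty)
    (h23 : (Icc a2 b2 ∩ Icc a3 b3).Nonempty)
    (h24 : (Icc a2 b2 ∩ Icc a4 b4).Nonempty)
    (h34 : (Icc a3 b3 ∩ Icc a4 b4).Nonempty) :
    (Icc a1 b1 ∩ Icc a2 b2 ∩ Icc a3 b3 ∩ Icc a4 b4).Nonempty := by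
  obtain ⟨x12, hx12⟩ := h12
  obtain ⟨x13, hx13⟩ := h13
  obtain ⟨x14, hx14⟩ := h14
  obtain ⟨x23, hx23⟩ := h23
  obtain ⟨x24, hx24⟩ := h24
  obtain ⟨x34, hx34⟩ := h34
  simp only [mem_inter_iff, mem_Icc] at hx12 hx13 hx14 hx23 hx24 hx34
  refine ⟨max (max a1 a2) (max a3 a4), ?_⟩
  simp only [mem_inter_iff, mem_Icc]
  refine ⟨⟨⟨⟨?_, ?_⟩, ?_, ?_⟩, ?_, ?_⟩, ?_, ?_⟩
  · exact le_max_of_le_left (le_max_left _ _)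
  · exact max_le (max_le (by linarith) (by linarith)) (max_le (by linarith) (by linarith))
  · exact le_max_of_le_left (le_max_right _ _)
  · exact max_le (max_le (by linarith) (by linarith)) (max_le (by linarith) (by linarith))
  · exact le_max_of_le_right (le_max_left _ _)
  · exact max_le (max_le (by linarith) (by linarith)) (max_le (by linarith) (by linarith))
  · exact le_max_of_le_right (le_max_right _ _)
  · exact max_le (max_le (by linarith) (by linarith)) (max_le (by linarith) (by linarith))

private lemma sInfFeasAux (g : ℝ → ℝ) (hg : Continuous g) :
    ∃ lam0 ∈ Icc (0:ℝ) 1, (∀ lam ∈ Icc (0:ℝ) 1, g lam0 ≤ g lam) ∧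
      sInf {δ : ℝ | 0 ≤ δ ∧ ∃ lam ∈ Icc (0:ℝ) 1, g lam ≤ δ} = max (g lam0) 0 := by
  obtain ⟨lam0, h0, hmin⟩ :=
    isCompact_Icc.exists_isMinOn ⟨0, le_refl 0, zero_le_one⟩ hg.continuousOn
  have hmin' := isMinOn_iff.mp hmin
  refine ⟨lam0, h0, hmin', ?_⟩
  have hset : {δ : ℝ | 0 ≤ δ ∧ ∃ lam ∈ Icc (0:ℝ) 1, g lam ≤ δ} = Ici (max (g lam0) 0) := by
    ext δ
    simp only [mem_setOf_eq, mem_Ici, max_le_iff]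
    constructor
    · rintro ⟨hδ, lam, hlam, hle⟩
      exact ⟨le_trans (hmin' lam hlam) hle, hδ⟩
    · rintro ⟨h1, h2⟩
      exact ⟨h2, lam0, h0, h1⟩
  rw [hset, csInf_Ici]

private lemma sInfPairAux (f g : ℝ → ℝ) (hf : Continuous f) (hg : Continuous g) :
    ∃ lam0 ∈ Icc (0:ℝ) 1,
      (∀ lam ∈ Icc (0:ℝ) 1, max (f lam0) (g lam0) ≤ max (f lam) (g lam)) ∧
      sInf {δ : ℝ | 0 ≤ δ ∧ ∃ lam ∈ Icc (0:ℝ) 1, f lam ≤ δ ∧ g lam ≤ δ}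
        = max (max (f lam0) (g lam0)) 0 := by
  obtain ⟨l0, h0, hmin, he⟩ := sInfFeasAux (fun lam => max (f lam) (g lam)) (hf.max hg)
  refine ⟨l0, h0, hmin, ?_⟩
  rw [← he]
  congr 1
  ext δ
  simp only [mem_setOf_eq, max_le_iff]

private lemma sInfQuadAux (f g h k : ℝ → ℝ) (hf : Continuous f) (hg : Continuous g)
    (hh : Continuous h) (hk : Continuous k) :
    ∃ lam0 ∈ Icc (0:ℝ) 1,
      (∀ lam ∈ Icc (0:ℝ) 1, max (max (max (f lam0) (g lam0)) (h lam0)) (k lam0)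
        ≤ max (max (max (f lam) (g lam)) (h lam)) (k lam)) ∧
      sInf {δ : ℝ | 0 ≤ δ ∧ ∃ lam ∈ Icc (0:ℝ) 1, f lam ≤ δ ∧ g lam ≤ δ ∧ h lam ≤ δ ∧ k lam ≤ δ}
        = max (max (max (max (f lam0) (g lam0)) (h lam0)) (k lam0)) 0 := by
  obtain ⟨l0, h0, hmin, he⟩ := sInfFeasAux
    (fun lam => max (max (max (f lam) (g lam)) (h lam)) (k lam)) (((hf.max hg).max hh).max hk)
  refine ⟨l0, h0, hmin, ?_⟩
  rw [← he]
  have hseteq : {δ : ℝ | 0 ≤ δ ∧ ∃ lam ∈ Icc (0:ℝ) 1, f lam ≤ δ ∧ g lam ≤ δ ∧ h lam ≤ δ ∧ k lam ≤ δ}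
      = {δ : ℝ | 0 ≤ δ ∧ ∃ lam ∈ Icc (0:ℝ) 1, max (max (max (f lam) (g lam)) (h lam)) (k lam) ≤ δ} := by
    ext δ
    simp only [mem_setOf_eq, max_le_iff]
    constructor
    · rintro ⟨h0', lam, hl, h1, h2, h3, h4⟩
      exact ⟨h0', lam, hl, ⟨⟨h1, h2⟩, h3⟩, h4⟩
    · rintro ⟨h0', lam, hl, ⟨⟨h1, h2⟩, h3⟩, h4⟩
      exact ⟨h0', lam, hl, h1, h2, h3, h4⟩
  rw [hseteq]

private lemma convexOnNormLineAux {E : Type*} [NormedAddCommGroup E] [NormedSpace ℝ E]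
    (p q s : E) : ConvexOn ℝ univ (fun lam : ℝ => ‖p + lam • (q - p) - s‖) := by
  have h := (convexOn_norm (convex_univ (𝕜 := ℝ) (E := E))).comp_affineMap
      (AffineMap.lineMap (p - s) (q - s) : ℝ →ᵃ[ℝ] E)
  have heq : (fun lam : ℝ => ‖p + lam • (q - p) - s‖)
      = (norm ∘ (AffineMap.lineMap (p - s) (q - s) : ℝ →ᵃ[ℝ] E)) := by
    funext lam
    simp only [Function.comp_apply, AffineMap.lineMap_apply, vsub_eq_sub, vadd_eq_add]
    congr 1
    module
  rw [heq]
  simpa using h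

private lemma sublevelEqIccAux {f : ℝ → ℝ} (hf : ConvexOn ℝ univ f) (hc : Continuous f)
    {δ : ℝ} (hne : (Icc (0:ℝ) 1 ∩ {lam | f lam ≤ δ}).Nonempty) :
    ∃ a b, Icc (0:ℝ) 1 ∩ {lam | f lam ≤ δ} = Icc a b := by
  set A := Icc (0:ℝ) 1 ∩ {lam | f lam ≤ δ} with hA
  have hconv : Convex ℝ A := by
    have h1 : A = Icc (0:ℝ) 1 ∩ {x ∈ univ | f x ≤ δ} := by
      ext x; simp [hA]
    rw [h1]
    exact (convex_Icc 0 1).inter (hf.convex_le δ)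
  have hcomp : IsCompact A := isCompact_Icc.inter_right (isClosed_le hc continuous_const)
  exact ⟨sInf A, sSup A, eq_Icc_of_connected_compact ⟨hne, hconv.isPreconnected⟩ hcomp⟩

set_option maxHeartbeats 1000000

/-- Helly's theorem in dimension one for four closed intervals, together with its
consequence for the `L₂`-Skorokhod norm on `ℝⁿ × ℝ`: the least `δ` making the two
max-norm balls meet the segment equals the maximum of the six pairwise least `δ`s. -/
theorem helly_dim_one_and_skorokhod_pairwise :
    (∀ a1 b1 a2 b2 a3 b3 a4 b4 : ℝ,
      (Icc a1 b1 ∩ Icc a2 b2).Nonempty →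
      (Icc a1 b1 ∩ Icc a3 b3).Nonempty →
      (Icc a1 b1 ∩ Icc a4 b4).Nonempty →
      (Icc a2 b2 ∩ Icc a3 b3).Nonempty →
      (Icc a2 b2 ∩ Icc a4 b4).Nonempty →
      (Icc a3 b3 ∩ Icc a4 b4).Nonempty →
      (Icc a1 b1 ∩ Icc a2 b2 ∩ Icc a3 b3 ∩ Icc a4 b4).Nonempty) ∧
    (∀ (n : ℕ) (s1 s2 z z' : EuclideanSpace ℝ (Fin n)) (t1 t2 tz tz' : ℝ),
      let C1 : ℝ → ℝ := fun lam => ‖z + lam • (z' - z) - s1‖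
      let C2 : ℝ → ℝ := fun lam => |tz + lam * (tz' - tz) - t1|
      let C3 : ℝ → ℝ := fun lam => ‖z + lam • (z' - z) - s2‖
      let C4 : ℝ → ℝ := fun lam => |tz + lam * (tz' - tz) - t2|
      let pairδ : (ℝ → ℝ) → (ℝ → ℝ) → ℝ := fun Ci Cj =>
        sInf {δ : ℝ | 0 ≤ δ ∧ ∃ lam ∈ Icc (0:ℝ) 1, Ci lam ≤ δ ∧ Cj lam ≤ δ}
      sInf {δ : ℝ | 0 ≤ δ ∧ ∃ lam ∈ Icc (0:ℝ) 1,
          C1 lam ≤ δ ∧ C2 lam ≤ δ ∧ C3 lam ≤ δ ∧ C4 lam ≤ δ}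
        = max (max (max (pairδ C1 C2) (pairδ C1 C3))
                   (max (pairδ C1 C4) (pairδ C2 C3)))
              (max (pairδ C2 C4) (pairδ C3 C4))) := by
  constructor
  · exact hellyFourIcc
  intro n s1 s2 z z' t1 t2 tz tz' C1 C2 C3 C4 pairδ
  -- basic facts about the four constraint functions
  have hC2abs : C2 = fun lam => ‖tz + lam • (tz' - tz) - t1‖ := by
    funext lam
    show |tz + lam * (tz' - tz) - t1| = _
    rw [Real.norm_eq_abs, smul_eq_mul]
  have hC4abs : C4 = fun lam => ‖tz + lam • (tz' - tz) - t2‖ := by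
    funext lam
    show |tz + lam * (tz' - tz) - t2| = _
    rw [Real.norm_eq_abs, smul_eq_mul]
  have hv1 : ConvexOn ℝ univ C1 := convexOnNormLineAux z z' s1
  have hv3 : ConvexOn ℝ univ C3 := convexOnNormLineAux z z' s2
  have hv2 : ConvexOn ℝ univ C2 := by rw [hC2abs]; exact convexOnNormLineAux tz tz' t1
  have hv4 : ConvexOn ℝ univ C4 := by rw [hC4abs]; exact convexOnNormLineAux tz tz' t2
  have hc1 : Continuous C1 := by
    show Continuous fun lam : ℝ => ‖z + lam • (z' - z) - s1‖
    fun_prop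
  have hc3 : Continuous C3 := by
    show Continuous fun lam : ℝ => ‖z + lam • (z' - z) - s2‖
    fun_prop
  have hc2 : Continuous C2 := by
    rw [hC2abs]; fun_prop
  have hc4 : Continuous C4 := by
    rw [hC4abs]; fun_prop
  -- pairwise minimizers and sInf values
  obtain ⟨l12, hl12, hm12, he12⟩ := sInfPairAux C1 C2 hc1 hc2
  obtain ⟨l13, hl13, hm13, he13⟩ := sInfPairAux C1 C3 hc1 hc3
  obtain ⟨l14, hl14, hm14, he14⟩ := sInfPairAux C1 C4 hc1 hc4
  obtain ⟨l23, hl23, hm23, he23⟩ := sInfPairAux C2 C3 hc2 hc3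
  obtain ⟨l24, hl24, hm24, he24⟩ := sInfPairAux C2 C4 hc2 hc4
  obtain ⟨l34, hl34, hm34, he34⟩ := sInfPairAux C3 C4 hc3 hc4
  obtain ⟨l0, hl0, hm0, he0⟩ := sInfQuadAux C1 C2 C3 C4 hc1 hc2 hc3 hc4
  have e12 : pairδ C1 C2 = max (max (C1 l12) (C2 l12)) 0 := he12
  have e13 : pairδ C1 C3 = max (max (C1 l13) (C3 l13)) 0 := he13
  have e14 : pairδ C1 C4 = max (max (C1 l14) (C4 l14)) 0 := he14
  have e23 : pairδ C2 C3 = max (max (C2 l23) (C3 l23)) 0 := he23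
  have e24 : pairδ C2 C4 = max (max (C2 l24) (C4 l24)) 0 := he24
  have e34 : pairδ C3 C4 = max (max (C3 l34) (C4 l34)) 0 := he34
  rw [he0, e12, e13, e14, e23, e24, e34]
  set M4 : ℝ := max (max (max (C1 l0) (C2 l0)) (C3 l0)) (C4 l0) with hM4
  set R : ℝ := max (max (max (max (max (C1 l12) (C2 l12)) 0) (max (max (C1 l13) (C3 l13)) 0))
        (max (max (max (C1 l14) (C4 l14)) 0) (max (max (C2 l23) (C3 l23)) 0)))
      (max (max (max (C2 l24) (C4 l24)) 0) (max (max (C3 l34) (C4 l34)) 0)) with hR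
  -- bounds C_i l0 ≤ M4
  have ha : C1 l0 ≤ M4 := ((le_max_left _ _).trans (le_max_left _ _)).trans (le_max_left _ _)
  have hb : C2 l0 ≤ M4 := ((le_max_right _ _).trans (le_max_left _ _)).trans (le_max_left _ _)
  have hcle : C3 l0 ≤ M4 := (le_max_right _ _).trans (le_max_left _ _)
  have hd : C4 l0 ≤ M4 := le_max_right _ _
  apply le_antisymm
  · -- max M4 0 ≤ R, via Helly
    -- the six pairwise sInf values are ≤ R
    have hR12 : max (max (C1 l12) (C2 l12)) 0 ≤ R :=
      ((le_max_left _ _).trans (le_max_left _ _)).trans (le_max_left _ _)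
    have hR13 : max (max (C1 l13) (C3 l13)) 0 ≤ R :=
      ((le_max_right _ _).trans (le_max_left _ _)).trans (le_max_left _ _)
    have hR14 : max (max (C1 l14) (C4 l14)) 0 ≤ R :=
      ((le_max_left _ _).trans (le_max_right _ _)).trans (le_max_left _ _)
    have hR23 : max (max (C2 l23) (C3 l23)) 0 ≤ R :=
      ((le_max_right _ _).trans (le_max_right _ _)).trans (le_max_left _ _)
    have hR24 : max (max (C2 l24) (C4 l24)) 0 ≤ R :=
      (le_max_left _ _).trans (le_max_right _ _)
    have hR34 : max (max (C3 l34) (C4 l34)) 0 ≤ R :=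
      (le_max_right _ _).trans (le_max_right _ _)
    have hR0 : (0:ℝ) ≤ R := (le_max_right _ 0).trans hR34
    -- sublevel sets at level R
    have hA1 := sublevelEqIccAux hv1 hc1 (δ := R)
      ⟨l12, hl12, le_trans ((le_max_left _ _).trans (le_max_left _ _)) hR12⟩
    have hA2 := sublevelEqIccAux hv2 hc2 (δ := R)
      ⟨l12, hl12, le_trans ((le_max_right _ _).trans (le_max_left _ _)) hR12⟩
    have hA3 := sublevelEqIccAux hv3 hc3 (δ := R)
      ⟨l13, hl13, le_trans ((le_max_right _ _).trans (le_max_left _ _)) hR13⟩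
    have hA4 := sublevelEqIccAux hv4 hc4 (δ := R)
      ⟨l14, hl14, le_trans ((le_max_right _ _).trans (le_max_left _ _)) hR14⟩
    obtain ⟨a1, b1, hA1⟩ := hA1
    obtain ⟨a2, b2, hA2⟩ := hA2
    obtain ⟨a3, b3, hA3⟩ := hA3
    obtain ⟨a4, b4, hA4⟩ := hA4
    have mem12 : l12 ∈ Icc a1 b1 ∩ Icc a2 b2 := by
      rw [← hA1, ← hA2]
      exact ⟨⟨hl12, le_trans ((le_max_left _ _).trans (le_max_left _ _)) hR12⟩,
             ⟨hl12, le_trans ((le_max_right _ _).trans (le_max_left _ _)) hR12⟩⟩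
    have mem13 : l13 ∈ Icc a1 b1 ∩ Icc a3 b3 := by
      rw [← hA1, ← hA3]
      exact ⟨⟨hl13, le_trans ((le_max_left _ _).trans (le_max_left _ _)) hR13⟩,
             ⟨hl13, le_trans ((le_max_right _ _).trans (le_max_left _ _)) hR13⟩⟩
    have mem14 : l14 ∈ Icc a1 b1 ∩ Icc a4 b4 := by
      rw [← hA1, ← hA4]
      exact ⟨⟨hl14, le_trans ((le_max_left _ _).trans (le_max_left _ _)) hR14⟩,
             ⟨hl14, le_trans ((le_max_right _ _).trans (le_max_left _ _)) hR14⟩⟩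
    have mem23 : l23 ∈ Icc a2 b2 ∩ Icc a3 b3 := by
      rw [← hA2, ← hA3]
      exact ⟨⟨hl23, le_trans ((le_max_left _ _).trans (le_max_left _ _)) hR23⟩,
             ⟨hl23, le_trans ((le_max_right _ _).trans (le_max_left _ _)) hR23⟩⟩
    have mem24 : l24 ∈ Icc a2 b2 ∩ Icc a4 b4 := by
      rw [← hA2, ← hA4]
      exact ⟨⟨hl24, le_trans ((le_max_left _ _).trans (le_max_left _ _)) hR24⟩,
             ⟨hl24, le_trans ((le_max_right _ _).trans (le_max_left _ _)) hR24⟩⟩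
    have mem34 : l34 ∈ Icc a3 b3 ∩ Icc a4 b4 := by
      rw [← hA3, ← hA4]
      exact ⟨⟨hl34, le_trans ((le_max_left _ _).trans (le_max_left _ _)) hR34⟩,
             ⟨hl34, le_trans ((le_max_right _ _).trans (le_max_left _ _)) hR34⟩⟩
    obtain ⟨x, hx⟩ := hellyFourIcc a1 b1 a2 b2 a3 b3 a4 b4
      ⟨l12, mem12⟩ ⟨l13, mem13⟩ ⟨l14, mem14⟩ ⟨l23, mem23⟩ ⟨l24, mem24⟩ ⟨l34, mem34⟩
    have hx1 : x ∈ Icc (0:ℝ) 1 ∩ {lam | C1 lam ≤ R} := hA1 ▸ hx.1.1.1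
    have hx2 : x ∈ Icc (0:ℝ) 1 ∩ {lam | C2 lam ≤ R} := hA2 ▸ hx.1.1.2
    have hx3 : x ∈ Icc (0:ℝ) 1 ∩ {lam | C3 lam ≤ R} := hA3 ▸ hx.1.2
    have hx4 : x ∈ Icc (0:ℝ) 1 ∩ {lam | C4 lam ≤ R} := hA4 ▸ hx.2
    have hM4R : M4 ≤ R := by
      calc M4 ≤ max (max (max (C1 x) (C2 x)) (C3 x)) (C4 x) := hm0 x hx1.1
        _ ≤ R := max_le (max_le (max_le hx1.2 hx2.2) hx3.2) hx4.2
    exact max_le hM4R hR0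
  · -- R ≤ max M4 0
    refine max_le (max_le (max_le ?_ ?_) (max_le ?_ ?_)) (max_le ?_ ?_)
    · exact max_le_max (le_trans (hm12 l0 hl0) (max_le ha hb)) le_rfl
    · exact max_le_max (le_trans (hm13 l0 hl0) (max_le ha hcle)) le_rfl
    · exact max_le_max (le_trans (hm14 l0 hl0) (max_le ha hd)) le_rfl
    · exact max_le_max (le_trans (hm23 l0 hl0) (max_le hb hcle)) le_rfl
    · exact max_le_max (le_trans (hm24 l0 hl0) (max_le hb hd)) le_rfl
    · exact max_le_max (le_trans (hm34 l0 hl0) (max_le hcle hd)) le_rfl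
end
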